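/- arXiv:2305.18039 — 4 statements merged into one kernel-verified Lean document; each statement's English description precedes it below -/
import Mathlib

section
/- Let E be a finite set with a collection N of subsets of E, all of size r, with the property that no two distinct members of N agree on all but one element (equivalently, any two distinct members have at most r−2 common elements). Then the collection of subsets I of E such that I is not a superset of any member of N and |I| ≤ r, together with the condition that subsets of size r are independent iff they are not in N, forms the independent sets of a matroid of rank r (assuming |E| ≥ r and N is not all r-subsets). -/
/-- Let `N` be a family of `r`-subsets of a finite set `E` such
that distinct members intersect in at most `r − 2` elements, `N` is not all
`r`-subsets, and `|E| ≥ r`. Declaring `I` independent iff `|I| ≤ r` and `I` is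
contained in some `r`-subset not in `N`, the independent sets satisfy the
matroid axioms (so they define a matroid of rank `r`). -/
theorem sparse_paving_matroid {α : Type*} [DecidableEq α] [Fintype α]
    (r : ℕ) (hr : r ≤ Fintype.card α)
    (N : Finset (Finset α)) (hcard : ∀ B ∈ N, B.card = r)
    (hfar : ∀ B ∈ N, ∀ B' ∈ N, B ≠ B' → (B ∩ B').card ≤ r - 2)
    (hnotall : ∃ B : Finset α, B.card = r ∧ B ∉ N) :
    -- the independence predicate
    let Indep : Finset α → Prop := fun I =>
      I.card ≤ r ∧ ∃ B : Finset α, I ⊆ B ∧ B.card = r ∧ B ∉ N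
    -- matroid axioms
    (Indep ∅) ∧
    (∀ I J, Indep J → I ⊆ J → Indep I) ∧
    (∀ I J, Indep I → Indep J → I.card < J.card →
      ∃ x ∈ J \ I, Indep (insert x I)) ∧
    -- rank is r: every independent set extends to one of size r, none is larger
    (∀ I, Indep I → ∃ B, I ⊆ B ∧ Indep B ∧ B.card = r) := by
  intro Indep
  obtain ⟨B₀, hB₀card, hB₀N⟩ := hnotall
  have notboth : ∀ A B : Finset α, A.card = r → B.card = r → A ≠ B →
      2 ≤ r → r - 1 ≤ (A ∩ B).card → A ∉ N ∨ B ∉ N := by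
    intro A B hA hB hne h2 hint
    by_contra h
    push_neg at h
    have := hfar A h.1 B h.2 hne
    omega
  have lemA : ∀ S : Finset α, S.card + 1 ≤ r → ∃ B, S ⊆ B ∧ B.card = r ∧ B ∉ N := by
    intro S hS
    rcases Nat.lt_or_ge r 2 with h2 | h2
    · have : S = ∅ := Finset.card_eq_zero.mp (by omega)
      subst this
      exact ⟨B₀, Finset.empty_subset _, hB₀card, hB₀N⟩
    · obtain ⟨T, hST, hT⟩ :=
        Finset.exists_superset_card_eq (show S.card ≤ r - 1 by omega) (by omega)
      rcases eq_or_lt_of_le hr with heq | hlt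
      · refine ⟨Finset.univ, Finset.subset_univ _, by rw [Finset.card_univ]; omega, ?_⟩
        have hB : B₀ = Finset.univ := Finset.eq_univ_of_card _ (by rw [hB₀card]; omega)
        rwa [hB] at hB₀N
      · have hc : 1 < Tᶜ.card := by
          rw [Finset.card_compl, hT]; omega
        obtain ⟨a, ha, b, hb, hab⟩ := Finset.one_lt_card.mp hc
        rw [Finset.mem_compl] at ha hb
        have hAcard : (insert a T).card = r := by
          rw [Finset.card_insert_of_notMem ha, hT]; omega
        have hBcard : (insert b T).card = r := by
          rw [Finset.card_insert_of_notMem hb, hT]; omega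
        have hne : insert a T ≠ insert b T := by
          intro h
          have : a ∈ insert b T := h ▸ Finset.mem_insert_self a T
          rcases Finset.mem_insert.mp this with h' | h'
          · exact hab h'
          · exact ha h'
        have hint : r - 1 ≤ ((insert a T) ∩ (insert b T)).card := by
          calc r - 1 = T.card := hT.symm
            _ ≤ _ := Finset.card_le_card
              (Finset.subset_inter (Finset.subset_insert _ _) (Finset.subset_insert _ _))
        rcases notboth _ _ hAcard hBcard hne h2 hint with h | h
        · exact ⟨insert a T, hST.trans (Finset.subset_insert _ _), hAcard, h⟩
        · exact ⟨insert b T, hST.trans (Finset.subset_insert _ _), hBcard, h⟩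
  refine ⟨⟨by simp, B₀, Finset.empty_subset _, hB₀card, hB₀N⟩, ?_, ?_, ?_⟩
  · rintro I J ⟨hJr, B, hJB, hB⟩ hIJ
    exact ⟨(Finset.card_le_card hIJ).trans hJr, B, hIJ.trans hJB, hB⟩
  · rintro I J ⟨hIr, BI, hIBI, hBIr, hBIN⟩ ⟨hJr, BJ, hJBJ, hBJr, hBJN⟩ hlt
    have hJI : (J \ I).Nonempty := by
      rw [Finset.sdiff_nonempty]
      exact fun h => absurd (Finset.card_le_card h) (by omega)
    rcases Nat.lt_or_ge (I.card + 1) r with hsmall | hbig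
    · obtain ⟨x, hx⟩ := hJI
      have hci := Finset.card_insert_le x I
      obtain ⟨B, hSB, hBr, hBN⟩ := lemA (insert x I) (by omega)
      exact ⟨x, hx, by omega, B, hSB, hBr, hBN⟩
    · -- I.card = r - 1, J.card = r
      have hIc : I.card + 1 = r := by omega
      have hJc : J.card = r := by omega
      have hJeq : J = BJ := Finset.eq_of_subset_of_card_le hJBJ (by omega)
      have hJN : J ∉ N := hJeq ▸ hBJN
      by_cases hIJ : I ⊆ J
      · obtain ⟨x, hx⟩ := hJI
        have hxJ := (Finset.mem_sdiff.mp hx).1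
        have hxI := (Finset.mem_sdiff.mp hx).2
        have hsub : insert x I ⊆ J := Finset.insert_subset hxJ hIJ
        have hcard : (insert x I).card = r := by
          rw [Finset.card_insert_of_notMem hxI]; omega
        have heq : insert x I = J := Finset.eq_of_subset_of_card_le hsub (by omega)
        exact ⟨x, hx, by omega, J, hsub, hJc, hJN⟩
      · have hss : I ∩ J ⊂ I := by
          refine Finset.ssubset_iff_subset_ne.mpr ⟨Finset.inter_subset_left, fun h => hIJ ?_⟩
          rw [← h]
          exact Finset.inter_subset_right
        have hlt2 : (I ∩ J).card < I.card := Finset.card_lt_card hss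
        have hsd : (J \ I).card + (J ∩ I).card = J.card := Finset.card_sdiff_add_card_inter J I
        rw [Finset.inter_comm] at hsd
        have h2c : 1 < (J \ I).card := by omega
        have h2r : 2 ≤ r := by
          have := Finset.card_le_card (Finset.sdiff_subset (s := J) (t := I))
          omega
        obtain ⟨a, ha, b, hb, hab⟩ := Finset.one_lt_card.mp h2c
        have haJ := (Finset.mem_sdiff.mp ha).1
        have haI := (Finset.mem_sdiff.mp ha).2
        have hbI := (Finset.mem_sdiff.mp hb).2
        have hAcard : (insert a I).card = r := by
          rw [Finset.card_insert_of_notMem haI]; omega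
        have hBcard : (insert b I).card = r := by
          rw [Finset.card_insert_of_notMem hbI]; omega
        have hne2 : insert a I ≠ insert b I := by
          intro h
          have : a ∈ insert b I := h ▸ Finset.mem_insert_self a I
          rcases Finset.mem_insert.mp this with h' | h'
          · exact hab h'
          · exact haI h'
        have hint2 : r - 1 ≤ ((insert a I) ∩ (insert b I)).card := by
          calc r - 1 = I.card := by omega
            _ ≤ _ := Finset.card_le_card
              (Finset.subset_inter (Finset.subset_insert _ _) (Finset.subset_insert _ _))
        rcases notboth _ _ hAcard hBcard hne2 h2r hint2 with h | h
        · exact ⟨a, ha, by omega, insert a I, Finset.Subset.refl _, hAcard, h⟩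
        · exact ⟨b, hb, by omega, insert b I, Finset.Subset.refl _, hBcard, h⟩
  · rintro I ⟨hIr, B, hIB, hBr, hBN⟩
    exact ⟨B, hIB, ⟨hBr.le, B, Finset.Subset.refl _, hBr, hBN⟩, hBr⟩
end

section
/- Let T be a finite rooted tree where every non-leaf node has at least two children, and fix for each non-leaf node a chosen child. Then one can assign weights from ℤ/3ℤ to the leaves of T so that for every non-leaf node x, the weight of the subtree of the chosen child of x (the sum of leaf weights in that subtree) is strictly greater, under the order 0 < 1 < 2 on representatives, than the weight of the subtree of every other child of x; moreover, the total weight of T can be made equal to any prescribed element of ℤ/3ℤ. -/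
/-- A finite rooted tree whose internal nodes each have a distinguished
("chosen") child plus at least one further child (so at least two children),
and whose leaves carry labels from `α`. -/
inductive CTree (α : Type) where
  | leaf : α → CTree α
  | node : CTree α → (n : ℕ) → (Fin (n + 1) → CTree α) → CTree α

namespace CTree

/-- The weight of a tree with `ZMod 3`-weighted leaves: the sum of leaf weights. -/
def weight : CTree (ZMod 3) → ZMod 3
  | .leaf a => a
  | .node c n f => weight c + ∑ i : Fin (n + 1), weight (f i)

/-- The underlying shape of a tree (forgetting leaf labels). -/
def shape {α : Type} : CTree α → CTree Unit
  | .leaf _ => .leaf ()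
  | .node c n f => .node (shape c) n fun i => shape (f i)

/-- At every internal node, the weight of the chosen child's subtree is strictly
greater (under the order `0 < 1 < 2` on representatives) than the weight of
every other child's subtree. -/
def Good : CTree (ZMod 3) → Prop
  | .leaf _ => True
  | .node c n f => Good c ∧ (∀ i, Good (f i)) ∧
      ∀ i : Fin (n + 1), (weight (f i)).val < (weight c).val

end CTree

/-- For every shape of a finite rooted tree in which each
internal node has at least two children and a chosen child, and every prescribed
total weight `a ∈ ℤ/3ℤ`, there is an assignment of weights from `ℤ/3ℤ` to the
leaves such that at every internal node the chosen child's subtree outweighs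
all its siblings (under `0 < 1 < 2`), and the total weight equals `a`. -/
theorem exists_good_weighting (s : CTree Unit) (a : ZMod 3) :
    ∃ t : CTree (ZMod 3), t.shape = s ∧ t.Good ∧ t.weight = a := by
  induction s generalizing a with
  | leaf u => exact ⟨.leaf a, by cases u; rfl, trivial, rfl⟩
  | node c n f ihc ihf =>
    obtain ⟨tc, hcs, hcg, hcw⟩ := ihc (if a = 0 then 2 else a)
    choose tf hfs hfg hfw using fun i => ihf i (if a = 0 ∧ i = (0 : Fin (n+1)) then 1 else 0)
    refine ⟨.node tc n tf, ?_, ⟨hcg, hfg, ?_⟩, ?_⟩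
    · show CTree.node (tc.shape) n (fun i => (tf i).shape) = _
      rw [hcs]
      congr 1
      funext i
      exact hfs i
    · intro i
      rw [hcw, hfw i]
      by_cases h0 : a = 0
      · by_cases hi : i = 0 <;> simp [h0, hi] <;> decide
      · rw [if_neg (by tauto), if_neg h0]
        simpa using ZMod.val_pos.mpr h0
    · show tc.weight + ∑ i : Fin (n+1), (tf i).weight = a
      rw [hcw]
      have : ∀ i, (tf i).weight = (if a = 0 ∧ i = (0 : Fin (n+1)) then 1 else 0) :=
        fun i => hfw i
      simp only [this]
      by_cases h : a = 0
      · subst h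
        simp [Finset.sum_ite_eq']
        decide
      · simp [h]
end

section
/- Let 𝔽 be a finite field, and let M be a matroid on finite ground set E represented by v : E → W. For a partition E = X₁ ⊔ X₂, define two subsets Y, Y' ⊆ X₁ to be equivalent if for every Z ⊆ X₂, the sum of vectors over Y ∪ Z is zero iff the sum over Y' ∪ Z is zero. Then the number of equivalence classes is at most 1 + |𝔽|^(dim(span(v(X₁)) ∩ span(v(X₂)))). -/
/-- For a represented matroid `v : E → W` over a finite field
`𝔽` and a partition `E = X₁ ⊔ X₂`, call `Y, Y' ⊆ X₁` equivalent when for every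
`Z ⊆ X₂` the sum over `Y ∪ Z` is zero iff the sum over `Y' ∪ Z` is zero. The
number of equivalence classes is at most
`1 + |𝔽| ^ dim(span(v(X₁)) ∩ span(v(X₂)))`. -/
theorem sensitivity_le_connectivity_bound {𝔽 W E : Type*} [Field 𝔽] [Fintype 𝔽]
    [AddCommGroup W] [Module 𝔽 W] [FiniteDimensional 𝔽 W]
    [Fintype E] [DecidableEq E]
    (v : E → W) (X₁ X₂ : Finset E)
    (hdisj : Disjoint X₁ X₂) (hunion : X₁ ∪ X₂ = Finset.univ) :
    Nat.card (Quot fun Y Y' : {Y : Finset E // Y ⊆ X₁} =>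
        ∀ Z : Finset E, Z ⊆ X₂ →
          (((∑ e ∈ Y.1, v e) + ∑ e ∈ Z, v e = 0) ↔
            ((∑ e ∈ Y'.1, v e) + ∑ e ∈ Z, v e = 0))) ≤
      1 + Fintype.card 𝔽 ^
        Module.finrank 𝔽
          ((Submodule.span 𝔽 (v '' ↑X₁)) ⊓ (Submodule.span 𝔽 (v '' ↑X₂)) :
            Submodule 𝔽 W) := by
  classical
  haveI : Finite W := Module.finite_of_finite 𝔽
  set S := (Submodule.span 𝔽 (v '' ↑X₁)) ⊓ (Submodule.span 𝔽 (v '' ↑X₂)) with hS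
  haveI : Fintype S := Fintype.ofFinite S
  have hmem : ∀ (Y : {Y : Finset E // Y ⊆ X₁}) (Z : Finset E), Z ⊆ X₂ →
      (∑ e ∈ Y.1, v e) + ∑ e ∈ Z, v e = 0 → (∑ e ∈ Y.1, v e) ∈ S := by
    intro Y Z hZ h
    constructor
    · exact Submodule.sum_mem _ fun e he => Submodule.subset_span ⟨e, Y.2 he, rfl⟩
    · have heq : (∑ e ∈ Y.1, v e) = -∑ e ∈ Z, v e := eq_neg_of_add_eq_zero_left h
      rw [heq]
      exact Submodule.neg_mem _
        (Submodule.sum_mem _ fun e he => Submodule.subset_span ⟨e, hZ he, rfl⟩)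
  set g : {Y : Finset E // Y ⊆ X₁} → Option S := fun Y =>
    if h : ∃ Z : Finset E, Z ⊆ X₂ ∧ (∑ e ∈ Y.1, v e) + ∑ e ∈ Z, v e = 0
    then some ⟨∑ e ∈ Y.1, v e, hmem Y h.choose h.choose_spec.1 h.choose_spec.2⟩
    else none with hg
  have hresp : ∀ Y Y' : {Y : Finset E // Y ⊆ X₁},
      (∀ Z : Finset E, Z ⊆ X₂ →
        (((∑ e ∈ Y.1, v e) + ∑ e ∈ Z, v e = 0) ↔
          ((∑ e ∈ Y'.1, v e) + ∑ e ∈ Z, v e = 0))) → g Y = g Y' := by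
    intro Y Y' h
    by_cases hY : ∃ Z : Finset E, Z ⊆ X₂ ∧ (∑ e ∈ Y.1, v e) + ∑ e ∈ Z, v e = 0
    · obtain ⟨Z, hZ, hz⟩ := hY
      have hz' : (∑ e ∈ Y'.1, v e) + ∑ e ∈ Z, v e = 0 := (h Z hZ).mp hz
      have hY : ∃ Z : Finset E, Z ⊆ X₂ ∧ (∑ e ∈ Y.1, v e) + ∑ e ∈ Z, v e = 0 := ⟨Z, hZ, hz⟩
      have hY' : ∃ Z : Finset E, Z ⊆ X₂ ∧ (∑ e ∈ Y'.1, v e) + ∑ e ∈ Z, v e = 0 := ⟨Z, hZ, hz'⟩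
      have heq : (∑ e ∈ Y.1, v e) = ∑ e ∈ Y'.1, v e := by
        rw [eq_neg_of_add_eq_zero_left hz, eq_neg_of_add_eq_zero_left hz']
      simp only [hg, dif_pos hY, dif_pos hY']
      exact congrArg some (Subtype.ext heq)
    · have hY' : ¬∃ Z : Finset E, Z ⊆ X₂ ∧ (∑ e ∈ Y'.1, v e) + ∑ e ∈ Z, v e = 0 := by
        rintro ⟨Z, hZ, hz⟩; exact hY ⟨Z, hZ, (h Z hZ).mpr hz⟩
      simp only [hg, dif_neg hY, dif_neg hY']
  have hinj : Function.Injective (Quot.lift g hresp) := by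
    intro a b
    refine Quot.induction_on₂ a b ?_
    intro Y Y' h
    simp only [Quot.lift_mk] at h
    apply Quot.sound
    intro Z hZ
    by_cases hY : ∃ Z : Finset E, Z ⊆ X₂ ∧ (∑ e ∈ Y.1, v e) + ∑ e ∈ Z, v e = 0
    · by_cases hY' : ∃ Z : Finset E, Z ⊆ X₂ ∧ (∑ e ∈ Y'.1, v e) + ∑ e ∈ Z, v e = 0
      · simp only [hg, dif_pos hY, dif_pos hY', Option.some.injEq, Subtype.ext_iff] at h
        rw [h]
      · simp [hg, dif_pos hY, dif_neg hY'] at h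
    · by_cases hY' : ∃ Z : Finset E, Z ⊆ X₂ ∧ (∑ e ∈ Y'.1, v e) + ∑ e ∈ Z, v e = 0
      · simp [hg, dif_neg hY, dif_pos hY'] at h
      · constructor
        · intro hz; exact absurd ⟨Z, hZ, hz⟩ hY
        · intro hz; exact absurd ⟨Z, hZ, hz⟩ hY'
  have hle := Nat.card_le_card_of_injective _ hinj
  refine hle.trans ?_
  rw [Nat.card_eq_fintype_card, Fintype.card_option, Module.card_eq_pow_finrank (K := 𝔽) (V := S)]
  omega
end

section
/- For every finite monoid M there exists k such that every finite sequence of elements of M is the yield of some factorization tree of height at most k (Simon's Factorization Forest Theorem, with the standard bound k = 3|M|). -/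
/-- A finite ordered rooted tree with leaves labelled by elements of `M`. -/
inductive FTree (M : Type*) where
  | leaf : M → FTree M
  | node : (n : ℕ) → (Fin n → FTree M) → FTree M

namespace FTree

variable {M : Type*} [Monoid M]

/-- The (implicit) label of a tree: the ordered product of its leaf labels. -/
def label : FTree M → M
  | .leaf m => m
  | .node n f => (List.ofFn fun i : Fin n => label (f i)).prod

/-- The yield: the left-to-right sequence of leaf labels. -/
def yield : FTree M → List M
  | .leaf m => [m]
  | .node n f => (List.ofFn fun i : Fin n => yield (f i)).flatten

/-- The height: the maximum number of edges on a root-to-leaf path. -/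
def height : FTree M → ℕ
  | .leaf _ => 0
  | .node n f => (Finset.univ.sup fun i : Fin n => height (f i)) + 1

/-- A factorization tree: at every node with at least 3 children, all children
have the same label, and that label is idempotent. -/
def Valid : FTree M → Prop
  | .leaf _ => True
  | .node n f => (∀ i, Valid (f i)) ∧
      (3 ≤ n → ∃ e : M, e * e = e ∧ ∀ i, label (f i) = e)

end FTree

set_option linter.unusedSectionVars false

namespace FFproof
open FTree

variable {M : Type*} [Monoid M]

/-- `x ∈ M t` -/
def inL (x t : M) : Prop := ∃ m, x = m * t
/-- `x ∈ t M` -/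
def inR (x t : M) : Prop := ∃ m, x = t * m
/-- `x ∈ M t M` -/
def inJ (x t : M) : Prop := ∃ u v, x = u * t * v

def eqL (x t : M) : Prop := inL x t ∧ inL t x
def eqR (x t : M) : Prop := inR x t ∧ inR t x
def eqJ (x t : M) : Prop := inJ x t ∧ inJ t x

lemma inL_trans {x y z : M} (h1 : inL x y) (h2 : inL y z) : inL x z := by
  obtain ⟨a, rfl⟩ := h1; obtain ⟨b, rfl⟩ := h2; exact ⟨a * b, (mul_assoc _ _ _).symm⟩

lemma inR_trans {x y z : M} (h1 : inR x y) (h2 : inR y z) : inR x z := by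
  obtain ⟨a, rfl⟩ := h1; obtain ⟨b, rfl⟩ := h2; exact ⟨b * a, mul_assoc _ _ _⟩

lemma inJ_trans {x y z : M} (h1 : inJ x y) (h2 : inJ y z) : inJ x z := by
  obtain ⟨a, b, rfl⟩ := h1; obtain ⟨c, d, rfl⟩ := h2
  exact ⟨a * c, d * b, by simp [mul_assoc]⟩

lemma inJ_mul_right {x d : M} (w : M) (h : inJ x d) : inJ (x * w) d := by
  obtain ⟨u, v, rfl⟩ := h; exact ⟨u, v * w, by simp [mul_assoc]⟩

lemma inJ_mul_left {x d : M} (w : M) (h : inJ x d) : inJ (w * x) d := by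
  obtain ⟨u, v, rfl⟩ := h; exact ⟨w * u, v, by simp [mul_assoc]⟩

lemma inL_of_eqL_eqL {a b t : M} (ha : eqL a t) (hb : eqL b t) : inL a b :=
  inL_trans ha.1 hb.2

lemma inR_of_eqR_eqR {a b s : M} (ha : eqR a s) (hb : eqR b s) : inR a b :=
  inR_trans ha.1 hb.2

/-- every element of a finite monoid has an idempotent positive power -/
lemma exists_idem_pow [Finite M] (a : M) : ∃ k, 0 < k ∧ a ^ k * a ^ k = a ^ k := by
  obtain ⟨i, j, hne, hij⟩ := Finite.exists_ne_map_eq_of_infinite (fun n : ℕ => a ^ n)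
  wlog hlt : i < j generalizing i j
  · exact this j i hne.symm hij.symm (by omega)
  set p := j - i with hp
  have hppos : 0 < p := by omega
  have step : ∀ m, i ≤ m → a ^ (m + p) = a ^ m := by
    intro m hm
    have h1 : m + p = (m - i) + j := by omega
    have h2 : m = (m - i) + i := by omega
    rw [h1, pow_add, ← hij, ← pow_add, ← h2]
  have rep : ∀ c m, i ≤ m → a ^ (m + c * p) = a ^ m := by
    intro c
    induction c with
    | zero => simp
    | succ c ih =>
      intro m hm
      have : m + (c + 1) * p = (m + c * p) + p := by ring
      rw [this, step _ (by omega), ih m hm]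
  refine ⟨(i + 1) * p, by positivity, ?_⟩
  rw [← pow_add]
  have : (i + 1) * p + (i + 1) * p = (i + 1) * p + (i + 1) * p := rfl
  have hk : i ≤ (i + 1) * p := by nlinarith
  calc a ^ ((i + 1) * p + (i + 1) * p) = a ^ ((i + 1) * p) := rep (i + 1) _ hk

/-- L-stability: if `t * x = t` and `x ∈ M t M` then `x L t`. -/
lemma lstab [Finite M] {t x : M} (h1 : t * x = t) (h2 : inJ x t) : eqL x t := by
  obtain ⟨u, v, hx⟩ := h2
  have key : ∀ k, 0 < k → x = (u * t) ^ k * x * v ^ k := by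
    intro k hk
    induction k with
    | zero => omega
    | succ k ih =>
      have base : x = u * t * x * v := by
        calc x = u * t * v := hx
        _ = u * (t * x) * v := by rw [h1]
        _ = u * t * x * v := by simp [mul_assoc]
      rcases Nat.eq_zero_or_pos k with hk0 | hk0
      · subst hk0; simpa using base
      · calc x = (u * t) ^ k * x * v ^ k := ih hk0
          _ = (u * t) ^ k * (u * t * x * v) * v ^ k := by rw [← base]
          _ = (u * t) ^ (k+1) * x * v ^ (k+1) := by
              rw [pow_succ, pow_succ']
              simp [mul_assoc]

  obtain ⟨k, hk, hidem⟩ := exists_idem_pow (u * t)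
  have hx2 : x = (u * t) ^ k * x * v ^ k := key k hk
  have hfx : (u * t) ^ k * x = x := by
    conv_rhs => rw [hx2]
    conv_lhs => rw [hx2]
    rw [← mul_assoc, ← mul_assoc, hidem]
  have hf : (u * t) ^ k = ((u * t) ^ (k - 1) * u) * t := by
    have : k = (k - 1) + 1 := by omega
    rw [this, pow_succ]; simp [mul_assoc]
  constructor
  · refine ⟨(u * t) ^ (k - 1) * u, ?_⟩
    rw [← hfx, hf, mul_assoc, h1]
  · exact ⟨t, h1.symm⟩

/-- R-stability: if `x * s = s` and `x ∈ M s M` then `x R s`. -/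
lemma rstab [Finite M] {s x : M} (h1 : x * s = s) (h2 : inJ x s) : eqR x s := by
  obtain ⟨u, v, hx⟩ := h2
  have key : ∀ k, 0 < k → x = u ^ k * x * (s * v) ^ k := by
    intro k hk
    induction k with
    | zero => omega
    | succ k ih =>
      have base : x = u * x * (s * v) := by
        calc x = u * s * v := hx
        _ = u * (x * s) * v := by rw [h1]
        _ = u * x * (s * v) := by simp [mul_assoc]
      rcases Nat.eq_zero_or_pos k with hk0 | hk0
      · subst hk0; simpa using base
      · calc x = u ^ k * x * (s * v) ^ k := ih hk0
          _ = u ^ k * (u * x * (s * v)) * (s * v) ^ k := by rw [← base]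
          _ = u ^ (k+1) * x * (s * v) ^ (k+1) := by
              rw [pow_succ, pow_succ']
              simp [mul_assoc]
  obtain ⟨k, hk, hidem⟩ := exists_idem_pow (s * v)
  have hx2 : x = u ^ k * x * (s * v) ^ k := key k hk
  have hxf : x * (s * v) ^ k = x := by
    conv_lhs => rw [hx2]
    conv_rhs => rw [hx2]
    rw [mul_assoc, mul_assoc, hidem, ← mul_assoc]
  have hf : (s * v) ^ k = s * (v * (s * v) ^ (k - 1)) := by
    have hk' : k = 1 + (k - 1) := by omega
    rw [hk', pow_add, pow_one]; simp [mul_assoc]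
  constructor
  · refine ⟨v * (s * v) ^ (k - 1), ?_⟩
    calc x = x * (s * v) ^ k := hxf.symm
    _ = x * (s * (v * (s * v) ^ (k - 1))) := by rw [← hf]
    _ = (x * s) * (v * (s * v) ^ (k - 1)) := by simp [mul_assoc]
    _ = s * (v * (s * v) ^ (k - 1)) := by rw [h1]
  · exact ⟨s, h1.symm⟩

lemma stab_idem {z g : M} (hzg : inL z g) (h : g * z = g) : z * z = z := by
  obtain ⟨m, rfl⟩ := hzg
  calc m * g * (m * g) = m * (g * (m * g)) := by simp [mul_assoc]
  _ = m * g := by rw [show g * (m * g) = g from by rw [← mul_assoc, ← h]; simp [mul_assoc, h]]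

lemma stab_eq {z z' : M} (hz : z * z = z) (hz' : z' * z' = z')
    (h1 : inL z' z) (h2 : inR z z') : z = z' := by
  obtain ⟨u, hu⟩ := h1
  obtain ⟨v, hv⟩ := h2
  have e1 : z' * z = z' := by rw [hu, mul_assoc, hz]
  have e2 : z' * z = z := by rw [hv, ← mul_assoc, hz']
  rw [← e1, e2]

lemma cancel {t s g x y : M}
    (hw : ∃ a b, (eqL a t ∧ eqR a s) ∧ (eqL b t ∧ eqR b s) ∧ (eqL (a * b) t ∧ eqR (a * b) s))
    (hg : eqL g t ∧ eqR g s) (hx : eqL x t ∧ eqR x s) (hy : eqL y t ∧ eqR y s)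
    (h : g * x = g * y) : x = y := by
  obtain ⟨a, b, ha, hb, hab⟩ := hw
  obtain ⟨m, hm⟩ := inL_of_eqL_eqL hb.1 hab.1
  -- b = m * (a * b)
  obtain ⟨w, hwx⟩ := inR_of_eqR_eqR hx.2 hb.2
  obtain ⟨w', hwy⟩ := inR_of_eqR_eqR hy.2 hb.2
  obtain ⟨r, hr⟩ := inL_of_eqL_eqL ha.1 hg.1
  -- a = r * g
  have hfb : (m * a) * b = b := by rw [mul_assoc, ← hm]
  have hfx : (m * a) * x = x := by rw [hwx, ← mul_assoc, hfb]
  have hfy : (m * a) * y = y := by rw [hwy, ← mul_assoc, hfb]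
  calc x = (m * a) * x := hfx.symm
  _ = (m * r) * (g * x) := by rw [hr]; simp [mul_assoc]
  _ = (m * r) * (g * y) := by rw [h]
  _ = (m * a) * y := by rw [hr]; simp [mul_assoc]
  _ = y := hfy



abbrev lbl (L : List (FTree M)) : List M := L.map FTree.label

/-- maximum height in a list of trees -/
def hmax (L : List (FTree M)) : ℕ := (L.map FTree.height).foldr max 0

lemma hmax_nil : hmax ([] : List (FTree M)) = 0 := rfl

lemma hmax_cons (a : FTree M) (l : List (FTree M)) :
    hmax (a :: l) = max a.height (hmax l) := rfl

lemma height_le_hmax {T : FTree M} {L : List (FTree M)} (h : T ∈ L) : T.height ≤ hmax L := by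
  induction L with
  | nil => simp at h
  | cons a l ih =>
    rcases List.mem_cons.1 h with rfl | h
    · simp [hmax_cons]
    · exact le_trans (ih h) (by simp [hmax_cons])

lemma hmax_le {L : List (FTree M)} {c : ℕ} (h : ∀ T ∈ L, T.height ≤ c) : hmax L ≤ c := by
  induction L with
  | nil => simp [hmax_nil]
  | cons a l ih =>
    simp only [hmax_cons, max_le_iff]
    exact ⟨h a (by simp), ih fun T hT => h T (by simp [hT])⟩

lemma hmax_subset {A L : List (FTree M)} (h : ∀ T ∈ A, T ∈ L) : hmax A ≤ hmax L :=
  hmax_le fun T hT => height_le_hmax (h T hT)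

/-- binary node -/
def node2 (a b : FTree M) : FTree M := .node 2 ![a, b]

lemma ofFn_two {α : Type*} (f : Fin 2 → α) : List.ofFn f = [f 0, f 1] := by
  simp [List.ofFn_succ]

lemma node2_label (a b : FTree M) : (node2 a b).label = a.label * b.label := by
  simp [node2, label, ofFn_two]

lemma node2_yield (a b : FTree M) : (node2 a b).yield = a.yield ++ b.yield := by
  simp [node2, yield, ofFn_two]

lemma node2_valid {a b : FTree M} (ha : a.Valid) (hb : b.Valid) : (node2 a b).Valid := by
  refine ⟨?_, by omega⟩
  intro i
  fin_cases i <;> simpa [Matrix.cons_val_zero, Matrix.cons_val_one]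

lemma node2_height (a b : FTree M) : (node2 a b).height ≤ max a.height b.height + 1 := by
  simp only [node2, height, add_le_add_iff_right]
  refine Finset.sup_le fun i _ => ?_
  fin_cases i <;> simp

/-- flat node over a list of trees -/
def nodeL (L : List (FTree M)) : FTree M := .node L.length (fun i => L.get i)

lemma ofFn_get_comp {α β : Type*} (g : α → β) (L : List α) :
    (List.ofFn fun i => g (L.get i)) = L.map g := by
  rw [show (fun i => g (L.get i)) = g ∘ L.get from rfl, ← List.map_ofFn, List.ofFn_get]

lemma nodeL_label (L : List (FTree M)) : (nodeL L).label = (lbl L).prod := by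
  simp only [nodeL, label]
  rw [ofFn_get_comp]

lemma nodeL_yield (L : List (FTree M)) : (nodeL L).yield = (L.map FTree.yield).flatten := by
  simp only [nodeL, yield]
  rw [ofFn_get_comp]

lemma nodeL_valid {L : List (FTree M)} (h : ∀ T ∈ L, T.Valid)
    (he : 3 ≤ L.length → ∃ e, e * e = e ∧ ∀ T ∈ L, T.label = e) : (nodeL L).Valid := by
  refine ⟨fun i => h _ (L.get_mem _), fun h3 => ?_⟩
  obtain ⟨e, he1, he2⟩ := he h3
  exact ⟨e, he1, fun i => he2 _ (L.get_mem _)⟩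

lemma nodeL_height (L : List (FTree M)) : (nodeL L).height ≤ hmax L + 1 := by
  simp only [nodeL, height, add_le_add_iff_right]
  exact Finset.sup_le fun i _ => height_le_hmax (L.get_mem _)

/-- consecutive (non-empty infix) products -/
def Consec (ls : List M) (z : M) : Prop :=
  ∃ l1 m l2, ls = l1 ++ m ++ l2 ∧ m ≠ [] ∧ m.prod = z

lemma consec_append_right {A : List M} (B : List M) {z : M} (h : Consec A z) :
    Consec (A ++ B) z := by
  obtain ⟨l1, m, l2, rfl, hm, hz⟩ := h
  exact ⟨l1, m, l2 ++ B, by simp, hm, hz⟩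

lemma consec_append_left (A : List M) {B : List M} {z : M} (h : Consec B z) :
    Consec (A ++ B) z := by
  obtain ⟨l1, m, l2, rfl, hm, hz⟩ := h
  exact ⟨A ++ l1, m, l2, by simp, hm, hz⟩

lemma consec_whole {ls : List M} (h : ls ≠ []) : Consec ls ls.prod :=
  ⟨[], ls, [], by simp, h, rfl⟩

lemma consec_prefix {l1 : List M} (h : l1 ≠ []) (l2 : List M) : Consec (l1 ++ l2) l1.prod :=
  ⟨[], l1, l2, by simp, h, rfl⟩

lemma consec_nil {z : M} (h : Consec ([] : List M) z) : False := by
  obtain ⟨l1, m, l2, he, hm, _⟩ := h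
  rcases m with _ | ⟨a, m⟩
  · exact hm rfl
  · simp at he

lemma inJ_prod_of_consec {ls : List M} {z : M} (h : Consec ls z) : inJ ls.prod z := by
  obtain ⟨l1, m, l2, rfl, hm, rfl⟩ := h
  exact ⟨l1.prod, l2.prod, by simp [List.prod_append, mul_assoc]⟩

/-- all elements equal to an idempotent: product is that idempotent -/
lemma prod_eq_idem {ls : List M} {e : M} (he : e * e = e) (hne : ls ≠ [])
    (h : ∀ x ∈ ls, x = e) : ls.prod = e := by
  induction ls with
  | nil => simp at hne
  | cons a l ih =>
    rcases eq_or_ne l [] with rfl | hl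
    · simpa using h a (by simp)
    · rw [List.prod_cons, h a (by simp), ih hl fun x hx => h x (by simp [hx]), he]

lemma map_eq_append_split {α β : Type*} (f : α → β) :
    ∀ (Ps : List α) (l1 l2 : List β), Ps.map f = l1 ++ l2 →
      ∃ P1 P2, Ps = P1 ++ P2 ∧ P1.map f = l1 ∧ P2.map f = l2 := by
  intro Ps
  induction Ps with
  | nil =>
    intro l1 l2 h
    simp only [List.map_nil] at h
    obtain ⟨h1, h2⟩ := (List.append_eq_nil_iff).1 h.symm
    exact ⟨[], [], by simp [h1, h2]⟩
  | cons a Ps ih =>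
    intro l1 l2 h
    cases l1 with
    | nil => exact ⟨[], a :: Ps, by simpa using h⟩
    | cons b l1 =>
      simp only [List.map_cons, List.cons_append, List.cons.injEq] at h
      obtain ⟨rfl, h2⟩ := h
      obtain ⟨P1, P2, rfl, hP1, hP2⟩ := ih l1 l2 h2
      exact ⟨a :: P1, P2, by simp, by simp [hP1], hP2⟩

lemma lbl_join (Ps : List (List (FTree M))) : lbl Ps.flatten = (Ps.map lbl).flatten := by
  simp [lbl]

lemma prod_map_parts (Ps : List (List (FTree M))) :
    ((Ps.map fun P => (lbl P).prod).prod) = (lbl Ps.flatten).prod := by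
  induction Ps with
  | nil => simp
  | cons P Ps ih => simp [List.prod_append, ih]

lemma consec_of_parts {Ps : List (List (FTree M))} (Rf : List (FTree M)) {z : M}
    (hne : ∀ P ∈ Ps, P ≠ []) (h : Consec (Ps.map fun P => (lbl P).prod) z) :
    Consec (lbl (Ps.flatten ++ Rf)) z := by
  obtain ⟨l1, m, l2, hsplit, hm, hz⟩ := h
  obtain ⟨P1, P23, rfl, hP1, hP23⟩ := map_eq_append_split _ Ps l1 (m ++ l2) (by simpa using hsplit)
  obtain ⟨Pm, P2, rfl, hPm, hP2⟩ := map_eq_append_split _ P23 m l2 hP23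
  refine ⟨lbl P1.flatten, lbl Pm.flatten, lbl (P2.flatten ++ Rf), ?_, ?_, ?_⟩
  · simp [lbl]
  · have hPmne : Pm ≠ [] := by
      rintro rfl; simp at hPm; exact hm hPm
    obtain ⟨P, hP⟩ := List.exists_mem_of_ne_nil Pm hPmne
    have hPne : P ≠ [] := hne P (by simp [hP])
    intro hcon
    simp only [lbl, List.map_eq_nil_iff] at hcon
    rw [List.flatten_eq_nil_iff] at hcon
    exact hPne (hcon P hP)
  · rw [← hz, ← hPm, prod_map_parts]




lemma exists_least {p : ℕ → Prop} (h : ∃ n, p n) : ∃ n, p n ∧ ∀ m, m < n → ¬ p m := by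
  classical
  exact ⟨Nat.find h, Nat.find_spec h, fun m hm => Nat.find_min h hm⟩

lemma lbl_take (L : List (FTree M)) (i : ℕ) : lbl (L.take i) = (lbl L).take i := by
  simp [lbl, List.map_take]

lemma lbl_drop (L : List (FTree M)) (i : ℕ) : lbl (L.drop i) = (lbl L).drop i := by
  simp [lbl, List.map_drop]

lemma lbl_append (A B : List (FTree M)) : lbl (A ++ B) = lbl A ++ lbl B := by
  simp [lbl]

lemma lbl_ne_nil {L : List (FTree M)} (h : L ≠ []) : lbl L ≠ [] := by
  simp [lbl, h]

lemma eq_take_of_append {α : Type*} {ls l1 l2 : List α} (h : ls = l1 ++ l2) :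
    l1 = ls.take l1.length := by
  subst h; exact List.take_left.symm

lemma lemG [Fintype M] : ∀ (v : ℕ) (V : Finset M) (t s : M) (L : List (FTree M)),
    L ≠ [] → (∀ T ∈ L, T.Valid) →
    (∀ z, Consec (lbl L) z → eqL z t ∧ eqR z s) →
    (∀ l1 l2 : List M, lbl L = l1 ++ l2 → l1 ≠ [] → l1.prod ∈ V) →
    V.card ≤ v →
    ∃ T : FTree M, T.Valid ∧ T.yield = (L.map FTree.yield).flatten ∧
      T.label = (lbl L).prod ∧ T.height ≤ hmax L + 3 * v := by
  intro v
  induction v with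
  | zero =>
    intro V t s L hne hval hcons hV hcard
    exfalso
    have hgV : (lbl L).prod ∈ V := hV (lbl L) [] (by simp) (lbl_ne_nil hne)
    have : 0 < V.card := Finset.card_pos.2 ⟨_, hgV⟩
    omega
  | succ v ih =>
    intro V t s L hne hval hcons hV hcard
    classical
    set g := (lbl L).prod with hgdef
    have hgV : g ∈ V := hV (lbl L) [] (by simp) (lbl_ne_nil hne)
    have hg : eqL g t ∧ eqR g s := hcons g (consec_whole (lbl_ne_nil hne))
    -- find the first cut
    have hex : ∃ i, 0 < i ∧ i ≤ L.length ∧ ((lbl L).take i).prod = g := by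
      refine ⟨L.length, by
        have := List.length_pos_iff.2 hne
        omega, le_rfl, ?_⟩
      rw [show (lbl L).take L.length = lbl L from by
        conv_lhs => rw [← List.length_map (as := L) FTree.label]
        exact List.take_length]
    obtain ⟨i1, ⟨hi1pos, hi1le, hi1g⟩, hi1min⟩ := exists_least hex
    set B := L.take i1 with hBdef
    set R := L.drop i1 with hRdef
    have hLBR : L = B ++ R := (List.take_append_drop _ _).symm
    have hlblB : lbl B = (lbl L).take i1 := lbl_take L i1
    have hBprod : (lbl B).prod = g := by rw [hlblB, hi1g]
    have hBne : B ≠ [] := by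
      have : B.length = i1 := by
        rw [hBdef, List.length_take]; omega
      intro h; rw [h] at this; simp at this; omega
    have hBsub : ∀ T ∈ B, T ∈ L := fun T hT => List.take_subset _ _ hT
    -- generic block builder with trimmed last element
    have buildBlock : ∀ (V' : Finset M) (C : List (FTree M)), C ≠ [] →
        (∀ T ∈ C, T ∈ L) →
        (∀ z, Consec (lbl C) z → Consec (lbl L) z) →
        (∀ l1 l2 : List M, lbl C.dropLast = l1 ++ l2 → l1 ≠ [] → l1.prod ∈ V') →
        V'.card ≤ v →
        ∃ TB : FTree M, TB.Valid ∧ TB.yield = (C.map FTree.yield).flatten ∧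
          TB.label = (lbl C).prod ∧ TB.height ≤ hmax L + (3 * v + 1) := by
      intro V' C hCne hCsub hClift hV' hcard'
      set b := C.getLast hCne with hbdef
      have hCsplit : C.dropLast ++ [b] = C := List.dropLast_append_getLast hCne
      have hbL : b ∈ L := hCsub b (List.getLast_mem hCne)
      rcases eq_or_ne C.dropLast [] with hC' | hC'
      · have hCeq : C = [b] := by rw [← hCsplit, hC']; simp
        refine ⟨b, hval b hbL, by simp [hCeq], by simp [hCeq, lbl], ?_⟩
        exact le_trans (height_le_hmax hbL) (by omega)
      · obtain ⟨Tsub, hTv, hTy, hTl, hTh⟩ := ih V' t s C.dropLast hC'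
          (fun T hT => hval T (hCsub T (List.dropLast_subset _ hT)))
          (fun z hz => hcons z (hClift z (by
            rw [← hCsplit, lbl_append]
            exact consec_append_right _ hz)))
          hV' hcard'
        refine ⟨node2 Tsub b, node2_valid hTv (hval b hbL), ?_, ?_, ?_⟩
        · rw [node2_yield, hTy, ← hCsplit]
          simp
        · rw [node2_label, hTl, ← hCsplit, lbl_append, List.prod_append]
          simp [lbl]
        · refine le_trans (node2_height _ _) ?_
          have h1 : Tsub.height ≤ hmax L + 3 * v :=
            le_trans hTh (by
              have : hmax C.dropLast ≤ hmax L :=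
                hmax_subset fun T hT => hCsub T (List.dropLast_subset _ hT)
              omega)
          have h2 : b.height ≤ hmax L := height_le_hmax hbL
          omega
    -- the tree for B
    have hVB : ∀ l1 l2 : List M, lbl B.dropLast = l1 ++ l2 → l1 ≠ [] → l1.prod ∈ V.erase g := by
      intro l1 l2 hsp hl1
      have hBdl : B.dropLast ++ [B.getLast hBne] = B := List.dropLast_append_getLast hBne
      have hLsp : lbl L = l1 ++ (l2 ++ lbl ([B.getLast hBne] ++ R)) := by
        conv_lhs => rw [hLBR, ← hBdl]
        rw [List.append_assoc, lbl_append, lbl_append, hsp]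
        simp [List.append_assoc]
      refine Finset.mem_erase.2 ⟨?_, hV l1 _ hLsp hl1⟩
      have hl1take : l1 = (lbl L).take l1.length := eq_take_of_append hLsp
      have hlen : l1.length < i1 := by
        have h1 : l1.length ≤ (lbl B.dropLast).length := by
          rw [hsp]; simp
        have h2 : (lbl B.dropLast).length = B.length - 1 := by
          simp [lbl, List.length_dropLast]
        have h3 : B.length = i1 := by rw [hBdef, List.length_take]; omega
        have h4 : 0 < l1.length := List.length_pos_iff.2 hl1
        omega
      intro hcon
      exact hi1min l1.length hlen ⟨List.length_pos_iff.2 hl1,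
        by omega, by rw [← hl1take]; exact hcon⟩
    have hcardB : (V.erase g).card ≤ v := by
      rw [Finset.card_erase_of_mem hgV]; omega
    obtain ⟨TB, hTBv, hTBy, hTBl, hTBh⟩ := buildBlock (V.erase g) B hBne hBsub
      (fun z hz => by rw [hLBR, lbl_append]; exact consec_append_right _ hz) hVB hcardB
    rcases eq_or_ne R [] with hR | hRne
    · refine ⟨TB, hTBv, ?_, ?_, ?_⟩
      · rw [hTBy, hLBR, hR]; simp
      · rw [hTBl, hBprod]
      · omega
    · -- witnesses for cancellation
      have hRlift : ∀ z, Consec (lbl R) z → Consec (lbl L) z := fun z hz => by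
        rw [hLBR, lbl_append]; exact consec_append_left _ hz
      have hb : eqL (lbl R).prod t ∧ eqR (lbl R).prod s :=
        hcons _ (hRlift _ (consec_whole (lbl_ne_nil hRne)))
      have hprodsplit : g = (lbl B).prod * (lbl R).prod := by
        rw [hgdef]
        conv_lhs => rw [hLBR]
        rw [lbl_append, List.prod_append]
      have hw : ∃ a b', (eqL a t ∧ eqR a s) ∧ (eqL b' t ∧ eqR b' s) ∧
          (eqL (a * b') t ∧ eqR (a * b') s) := by
        refine ⟨(lbl B).prod, (lbl R).prod, ?_, hb, ?_⟩
        · exact hcons _ (by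
            rw [hLBR, lbl_append]
            exact consec_prefix (lbl_ne_nil hBne) _)
        · rw [← hprodsplit]; exact hg
      have hgR : g * (lbl R).prod = g := by
        calc g * (lbl R).prod = (lbl B).prod * (lbl R).prod := by rw [hBprod]
        _ = g := hprodsplit.symm
      -- the pre-image measure set
      set Vg : Finset M := Finset.univ.filter
        (fun h => (eqL h t ∧ eqR h s) ∧ g * h ∈ V.erase g) with hVgdef
      have hVgcard : Vg.card ≤ v := by
        have h1 : Vg.card ≤ (V.erase g).card := by
          refine Finset.card_le_card_of_injOn (fun h => g * h) ?_ ?_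
          · intro a ha
            simp only [hVgdef, Finset.mem_coe, Finset.mem_filter] at ha
            exact ha.2.2
          · intro a ha b' hb' heq
            simp only [hVgdef, Finset.mem_coe, Finset.mem_filter] at ha hb'
            exact cancel hw hg ha.2.1 hb'.2.1 heq
        have h2 := Finset.card_erase_of_mem hgV
        omega
      -- iterate blocks over R
      have hG2 : ∀ (m : ℕ) (R' : List (FTree M)), R'.length ≤ m → R' ≠ [] →
          (∀ T ∈ R', T ∈ L) →
          (∀ z, Consec (lbl R') z → Consec (lbl L) z) →
          (∀ l1 l2 : List M, lbl R' = l1 ++ l2 → l1 ≠ [] → g * l1.prod ∈ V) →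
          g * (lbl R').prod = g →
          ∃ TS : List (FTree M), TS ≠ [] ∧
            (∀ T ∈ TS, T.Valid ∧ T.label = (lbl R').prod ∧ T.height ≤ hmax L + (3 * v + 1)) ∧
            (TS.map FTree.yield).flatten = (R'.map FTree.yield).flatten := by
        intro m
        induction m with
        | zero =>
          intro R' hlen hRne'
          exfalso
          have := List.length_pos_iff.2 hRne'
          omega
        | succ m ihm =>
          intro R' hlen hRne' hsub' hlift' hRV' hgR'
          have hex' : ∃ j, 0 < j ∧ j ≤ R'.length ∧ g * ((lbl R').take j).prod = g := by
            refine ⟨R'.length, List.length_pos_iff.2 hRne', le_rfl, ?_⟩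
            rw [show (lbl R').take R'.length = lbl R' from by
              conv_lhs => rw [← List.length_map (as := R') FTree.label]
              exact List.take_length]
            exact hgR'
          obtain ⟨j, ⟨hjpos, hjle, hjg⟩, hjmin⟩ := exists_least hex'
          set C := R'.take j with hCdef
          set R'' := R'.drop j with hR''def
          have hCR : R' = C ++ R'' := (List.take_append_drop _ _).symm
          have hlblC : lbl C = (lbl R').take j := lbl_take R' j
          have hCne : C ≠ [] := by
            have : C.length = j := by rw [hCdef, List.length_take]; omega
            intro h; rw [h] at this; simp at this; omega
          set x := (lbl C).prod with hxdef
          have hgx : g * x = g := by rw [hxdef, hlblC]; exact hjg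
          have hCsub : ∀ T ∈ C, T ∈ L := fun T hT => hsub' T (List.take_subset _ _ hT)
          have hClift : ∀ z, Consec (lbl C) z → Consec (lbl L) z := fun z hz =>
            hlift' z (by rw [hCR, lbl_append]; exact consec_append_right _ hz)
          have hxH : eqL x t ∧ eqR x s := hcons x (hClift x (consec_whole (lbl_ne_nil hCne)))
          have heR : eqL (lbl R').prod t ∧ eqR (lbl R').prod s :=
            hcons _ (hlift' _ (consec_whole (lbl_ne_nil hRne')))
          have hxidem : x * x = x := stab_idem (inL_of_eqL_eqL hxH.1 hg.1) hgx
          have heidem : (lbl R').prod * (lbl R').prod = (lbl R').prod :=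
            stab_idem (inL_of_eqL_eqL heR.1 hg.1) hgR'
          have hxe : x = (lbl R').prod :=
            stab_eq hxidem heidem (inL_of_eqL_eqL heR.1 hxH.1) (inR_of_eqR_eqR hxH.2 heR.2)
          -- build the tree for block C
          have hVC : ∀ l1 l2 : List M, lbl C.dropLast = l1 ++ l2 → l1 ≠ [] → l1.prod ∈ Vg := by
            intro l1 l2 hsp hl1
            have hCdl : C.dropLast ++ [C.getLast hCne] = C := List.dropLast_append_getLast hCne
            have hRsp : lbl R' = l1 ++ (l2 ++ lbl ([C.getLast hCne] ++ R'')) := by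
              conv_lhs => rw [hCR, ← hCdl]
              rw [List.append_assoc, lbl_append, lbl_append, hsp]
              simp [List.append_assoc]
            have hmemV : g * l1.prod ∈ V := hRV' l1 _ hRsp hl1
            have hl1take : l1 = (lbl R').take l1.length := eq_take_of_append hRsp
            have hlen1 : l1.length < j := by
              have h1 : l1.length ≤ (lbl C.dropLast).length := by rw [hsp]; simp
              have h2 : (lbl C.dropLast).length = C.length - 1 := by
                simp [lbl, List.length_dropLast]
              have h3 : C.length = j := by rw [hCdef, List.length_take]; omega
              have h4 : 0 < l1.length := List.length_pos_iff.2 hl1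
              omega
            have hnotg : g * l1.prod ≠ g := by
              intro hcon
              exact hjmin l1.length hlen1 ⟨List.length_pos_iff.2 hl1, by omega,
                by rw [← hl1take]; exact hcon⟩
            have hl1H : eqL l1.prod t ∧ eqR l1.prod s := by
              refine hcons _ (hClift _ ?_)
              have : lbl C = l1 ++ (l2 ++ lbl [C.getLast hCne]) := by
                conv_lhs => rw [← hCdl]
                rw [lbl_append, hsp, List.append_assoc]
              exact ⟨[], l1, l2 ++ lbl [C.getLast hCne], by simpa using this, hl1, rfl⟩
            exact Finset.mem_filter.2 ⟨Finset.mem_univ _, hl1H,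
              Finset.mem_erase.2 ⟨hnotg, hmemV⟩⟩
          obtain ⟨TC, hTCv, hTCy, hTCl, hTCh⟩ := buildBlock Vg C hCne hCsub hClift hVC hVgcard
          rw [← hxdef] at hTCl
          rcases eq_or_ne R'' [] with hR'' | hR''ne
          · have hCR' : C = R' := by rw [hCR, hR'']; simp
            refine ⟨[TC], by simp, ?_, by simp [hTCy, hCR']⟩
            intro T hT
            simp only [List.mem_singleton] at hT
            subst hT
            exact ⟨hTCv, by rw [hTCl, hxdef, hCR'], hTCh⟩
          · have hlen'' : R''.length ≤ m := by
              have h1 : R''.length = R'.length - j := by rw [hR''def, List.length_drop]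
              omega
            have hxprod : (lbl R').prod = x * (lbl R'').prod := by
              rw [hxdef]
              conv_lhs => rw [hCR]
              rw [lbl_append, List.prod_append]
            have hgR'' : g * (lbl R'').prod = g := by
              have h1 : g * (lbl R'').prod = g * (lbl R').prod := by
                rw [hxprod, ← mul_assoc, hgx]
              rw [h1, hgR']
            obtain ⟨TS'', hTS''ne, hTS''mem, hTS''y⟩ := ihm R'' hlen'' hR''ne
              (fun T hT => hsub' T (List.drop_subset _ _ hT))
              (fun z hz => hlift' z (by rw [hCR, lbl_append]; exact consec_append_left _ hz))
              (by
                intro r1 r2 hsp hr1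
                have h5 := hRV' (lbl C ++ r1) r2
                  (by rw [hCR, lbl_append, hsp, List.append_assoc])
                  (by simp [lbl_ne_nil hCne])
                rw [List.prod_append, ← hxdef, ← mul_assoc, hgx] at h5
                exact h5)
              hgR''
            have heq'' : (lbl R'').prod = (lbl R').prod := by
              have heR'' : eqL (lbl R'').prod t ∧ eqR (lbl R'').prod s :=
                hcons _ (hlift' _ (by
                  rw [hCR, lbl_append]
                  exact consec_append_left _ (consec_whole (lbl_ne_nil hR''ne))))
              have h1 : (lbl R'').prod * (lbl R'').prod = (lbl R'').prod :=
                stab_idem (inL_of_eqL_eqL heR''.1 hg.1) hgR''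
              exact stab_eq h1 heidem (inL_of_eqL_eqL heR.1 heR''.1)
                (inR_of_eqR_eqR heR''.2 heR.2)
            refine ⟨TC :: TS'', by simp, ?_, ?_⟩
            · intro T hT
              rcases List.mem_cons.1 hT with rfl | hT
              · exact ⟨hTCv, by rw [hTCl, hxe], hTCh⟩
              · obtain ⟨h1, h2, h3⟩ := hTS''mem T hT
                exact ⟨h1, by rw [h2, heq''], h3⟩
            · rw [List.map_cons, List.flatten_cons, hTCy, hTS''y]
              conv_rhs => rw [hCR]
              rw [List.map_append, List.flatten_append]
      -- apply hG2 to R and finish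
      obtain ⟨TS, hTSne, hTSmem, hTSy⟩ := hG2 R.length R le_rfl hRne
        (fun T hT => List.drop_subset _ _ hT) hRlift
        (by
          intro r1 r2 hsp hr1
          have h5 := hV (lbl B ++ r1) r2
            (by rw [hLBR, lbl_append, hsp, List.append_assoc]) (by simp [lbl_ne_nil hBne])
          rw [List.prod_append, hBprod] at h5
          exact h5)
        hgR
      set e := (lbl R).prod with hedef
      have heidem : e * e = e :=
        stab_idem (inL_of_eqL_eqL hb.1 hg.1) hgR
      have hNLv : (nodeL TS).Valid := by
        refine nodeL_valid (fun T hT => (hTSmem T hT).1) (fun _ => ⟨e, heidem, ?_⟩)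
        exact fun T hT => (hTSmem T hT).2.1
      have hNLl : (nodeL TS).label = e := by
        rw [nodeL_label]
        refine prod_eq_idem heidem (lbl_ne_nil hTSne) ?_
        intro y hy
        obtain ⟨T, hT, rfl⟩ := List.mem_map.1 hy
        exact (hTSmem T hT).2.1
      refine ⟨node2 TB (nodeL TS), node2_valid hTBv hNLv, ?_, ?_, ?_⟩
      · rw [node2_yield, hTBy, nodeL_yield, hTSy]
        conv_rhs => rw [hLBR]
        rw [List.map_append, List.flatten_append]
      · rw [node2_label, hTBl, hNLl, hBprod, hgR]
      · have h1 : TB.height ≤ hmax L + (3 * v + 1) := hTBh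
        have h2 : (nodeL TS).height ≤ hmax TS + 1 := nodeL_height TS
        have h3 : hmax TS ≤ hmax L + (3 * v + 1) :=
          hmax_le fun T hT => (hTSmem T hT).2.2
        have h4 := node2_height TB (nodeL TS)
        omega



lemma eq_drop_of_append {α : Type*} {ls l1 l2 : List α} (h : ls = l1 ++ l2) :
    l2 = ls.drop l1.length := by
  subst h; exact List.drop_left.symm

lemma lemS [Fintype M] : ∀ (v : ℕ) (V : Finset (M × M)) (d cl cr : M) (L : List (FTree M)),
    L ≠ [] → (∀ T ∈ L, T.Valid) →
    (∀ z, Consec (lbl L) z → eqJ z d) →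
    (∀ l1 l2 : List M, lbl L = l1 ++ l2 → l1 ≠ [] → l2 ≠ [] →
      eqJ (cl * l1.prod) d ∧ eqJ (l2.prod * cr) d) →
    (∀ l1 l2 : List M, lbl L = l1 ++ l2 → l1 ≠ [] → l2 ≠ [] →
      (cl * l1.prod, l2.prod * cr) ∈ V) →
    V.card ≤ v →
    ∃ T : FTree M, T.Valid ∧ T.yield = (L.map FTree.yield).flatten ∧
      T.label = (lbl L).prod ∧ T.height ≤ hmax L + v * (3 * Fintype.card M + 2) := by
  intro v
  induction v with
  | zero =>
    intro V d cl cr L hne hval hcons hctx hV hcard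
    rcases eq_or_ne L.length 1 with hlen1 | hlen1
    · obtain ⟨a, rfl⟩ := List.length_eq_one_iff.1 hlen1
      exact ⟨a, hval a (by simp), by simp, by simp [lbl],
        le_trans (height_le_hmax (by simp)) (Nat.le_add_right _ _)⟩
    · exfalso
      have hlen2 : 2 ≤ L.length := by
        have := List.length_pos_iff.2 hne
        omega
      obtain ⟨hd, Ltl, rfl⟩ : ∃ hd Ltl, L = hd :: Ltl := by
        cases L with
        | nil => simp at hne
        | cons a l => exact ⟨a, l, rfl⟩
      have hLtlne : Ltl ≠ [] := by
        intro h; rw [h] at hlen2; simp at hlen2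
      have hmem := hV [hd.label] (lbl Ltl) (by simp [lbl]) (by simp) (lbl_ne_nil hLtlne)
      have : 0 < V.card := Finset.card_pos.2 ⟨_, hmem⟩
      omega
  | succ v ih =>
    intro V d cl cr L hne hval hcons hctx hV hcard
    classical
    rcases eq_or_ne L.length 1 with hlen1 | hlen1
    · obtain ⟨a, rfl⟩ := List.length_eq_one_iff.1 hlen1
      exact ⟨a, hval a (by simp), by simp, by simp [lbl],
        le_trans (height_le_hmax (by simp)) (Nat.le_add_right _ _)⟩
    have hlen2 : 2 ≤ L.length := by
      have := List.length_pos_iff.2 hne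
      omega
    obtain ⟨hd, Ltl, rfl⟩ : ∃ hd Ltl, L = hd :: Ltl := by
      cases L with
      | nil => simp at hne
      | cons a l => exact ⟨a, l, rfl⟩
    have hLtlne : Ltl ≠ [] := by
      intro h; rw [h] at hlen2; simp at hlen2
    have hsplit1 : lbl (hd :: Ltl) = [hd.label] ++ lbl Ltl := by simp [lbl]
    set t := cl * hd.label with htdef
    set s := (lbl Ltl).prod * cr with hsdef
    have htsV : (t, s) ∈ V := by
      have := hV [hd.label] (lbl Ltl) hsplit1 (by simp) (lbl_ne_nil hLtlne)
      simpa using this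
    have htsJ : eqJ t d ∧ eqJ s d := by
      have := hctx [hd.label] (lbl Ltl) hsplit1 (by simp) (lbl_ne_nil hLtlne)
      simpa using this
    have hcard' : (V.erase (t, s)).card ≤ v := by
      rw [Finset.card_erase_of_mem htsV]
      have : 0 < V.card := Finset.card_pos.2 ⟨_, htsV⟩
      omega
    -- the block iteration
    have hS2 : ∀ (m : ℕ) (R : List (FTree M)), R.length ≤ m → R ≠ [] →
        (∀ T ∈ R, T ∈ hd :: Ltl) →
        (∀ z, Consec (lbl R) z → Consec (lbl (hd :: Ltl)) z) →
        (∀ l1 l2 : List M, lbl R = l1 ++ l2 → l1 ≠ [] → l2 ≠ [] →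
          ((t * l1.prod, l2.prod * cr) ∈ V ∧ eqJ (t * l1.prod) d ∧ eqJ (l2.prod * cr) d)) →
        (lbl R).prod * cr = s →
        ∃ (TS : List (FTree M)) (Tf : FTree M) (Ps : List (List (FTree M))) (Rf : List (FTree M)),
          R = Ps.flatten ++ Rf ∧ Rf ≠ [] ∧ (∀ P ∈ Ps, P ≠ []) ∧
          TS.map FTree.label = Ps.map (fun P => (lbl P).prod) ∧
          (∀ T ∈ TS, T.Valid ∧ T.height ≤ hmax (hd :: Ltl) + v * (3 * Fintype.card M + 2)) ∧
          Tf.Valid ∧ Tf.height ≤ hmax (hd :: Ltl) + v * (3 * Fintype.card M + 2) ∧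
          Tf.label = (lbl Rf).prod ∧
          (TS.map FTree.yield).flatten ++ Tf.yield = (R.map FTree.yield).flatten ∧
          (∀ l1 l2 : List M, TS.map FTree.label = l1 ++ l2 →
            t * l1.prod = t ∧ l2.prod * (Tf.label * cr) = s) := by
      intro m
      induction m with
      | zero =>
        intro R hlen hRne
        exfalso
        have := List.length_pos_iff.2 hRne
        omega
      | succ m ihm =>
        intro R hlen hRne hsub hlift hPairs hstart
        by_cases hcut : ∃ i, 0 < i ∧ i < R.length ∧
            t * ((lbl R).take i).prod = t ∧ ((lbl R).drop i).prod * cr = s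
        · -- there is a cut; take the least one
          obtain ⟨i, ⟨hipos, hilt, hit, his⟩, himin⟩ := exists_least hcut
          set B := R.take i with hBdef
          set R' := R.drop i with hR'def
          have hBR : R = B ++ R' := (List.take_append_drop _ _).symm
          have hlblB : lbl B = (lbl R).take i := lbl_take R i
          have hlblR' : lbl R' = (lbl R).drop i := lbl_drop R i
          have hBne : B ≠ [] := by
            have : B.length = i := by rw [hBdef, List.length_take]; omega
            intro h; rw [h] at this; simp at this; omega
          have hR'ne : R' ≠ [] := by
            have : R'.length = R.length - i := by rw [hR'def, List.length_drop]
            intro h; rw [h] at this; simp at this; omega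
          have htx : t * (lbl B).prod = t := by rw [hlblB]; exact hit
          have hscut : (lbl R').prod * cr = s := by rw [hlblR']; exact his
          -- build the tree for block B by the outer induction
          obtain ⟨TB, hTBv, hTBy, hTBl, hTBh⟩ := ih (V.erase (t, s)) d t ((lbl R').prod * cr) B
            hBne (fun T hT => hval T (hsub T (List.take_subset _ _ hT)))
            (fun z hz => hcons z (hlift z (by
              rw [hBR, lbl_append]; exact consec_append_right _ hz)))
            (by
              intro l1 l2 hsp hl1 hl2
              have hsp' : lbl R = l1 ++ (l2 ++ lbl R') := by
                rw [hBR, lbl_append, hsp, List.append_assoc]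
              have h5 := (hPairs l1 (l2 ++ lbl R') hsp' hl1 (by simp [hl2])).2
              rw [List.prod_append, mul_assoc l2.prod] at h5
              exact h5)
            (by
              intro l1 l2 hsp hl1 hl2
              have hsp' : lbl R = l1 ++ (l2 ++ lbl R') := by
                rw [hBR, lbl_append, hsp, List.append_assoc]
              have h5 := (hPairs l1 (l2 ++ lbl R') hsp' hl1 (by simp [hl2])).1
              rw [List.prod_append, mul_assoc l2.prod] at h5
              refine Finset.mem_erase.2 ⟨?_, h5⟩
              have hl1take : l1 = (lbl R).take l1.length := eq_take_of_append hsp'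
              have hl2drop : l2 ++ lbl R' = (lbl R).drop l1.length := eq_drop_of_append hsp'
              have hlt : l1.length < i := by
                have h1 : l1.length + l2.length = (lbl B).length := by
                  rw [hsp]; simp
                have h2 : (lbl B).length = i := by
                  rw [hlblB, List.length_take]
                  have : R.length = (lbl R).length := (List.length_map _).symm
                  omega
                have h3 : 0 < l2.length := List.length_pos_iff.2 hl2
                omega
              intro hcon
              have hpair := Prod.mk.injEq .. ▸ hcon
              rw [Prod.mk.injEq] at hcon
              refine himin l1.length hlt ⟨List.length_pos_iff.2 hl1, by omega, ?_, ?_⟩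
              · rw [← hl1take]; exact hcon.1
              · rw [← hl2drop, List.prod_append, mul_assoc l2.prod]; exact hcon.2)
            hcard'
          -- recurse on R'
          have hxB : TB.label = (lbl B).prod := hTBl
          obtain ⟨TS', Tf, Ps', Rf, hpart, hRfne, hPsne, hlbls, hTSmem, hTfv, hTfh, hTfl, hy, hbd⟩ :=
            ihm R' (by
              have h1 : R'.length = R.length - i := by rw [hR'def, List.length_drop]
              omega) hR'ne
            (fun T hT => hsub T (List.drop_subset _ _ hT))
            (fun z hz => hlift z (by rw [hBR, lbl_append]; exact consec_append_left _ hz))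
            (by
              intro l1 l2 hsp hl1 hl2
              have hsp' : lbl R = (lbl B ++ l1) ++ l2 := by
                rw [hBR, lbl_append, hsp, List.append_assoc]
              have h5 := hPairs (lbl B ++ l1) l2 hsp' (by simp [lbl_ne_nil hBne]) hl2
              rwa [List.prod_append, ← mul_assoc, htx] at h5)
            hscut
          refine ⟨TB :: TS', Tf, B :: Ps', Rf, ?_, hRfne, ?_, ?_, ?_, hTfv, hTfh, hTfl, ?_, ?_⟩
          · rw [List.flatten_cons, List.append_assoc, ← hpart, hBR]
          · intro P hP
            rcases List.mem_cons.1 hP with rfl | hP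
            · exact hBne
            · exact hPsne P hP
          · rw [List.map_cons, List.map_cons, hlbls, hxB]
          · intro T hT
            rcases List.mem_cons.1 hT with rfl | hT
            · refine ⟨hTBv, le_trans hTBh ?_⟩
              have : hmax B ≤ hmax (hd :: Ltl) :=
                hmax_subset fun T hT => hsub T (List.take_subset _ _ hT)
              omega
            · exact hTSmem T hT
          · rw [List.map_cons, List.flatten_cons, hTBy, List.append_assoc, hy]
            conv_rhs => rw [hBR]
            rw [List.map_append, List.flatten_append]
          · intro l1 l2 hsp
            cases l1 with
            | nil =>
              simp only [List.nil_append] at hsp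
              constructor
              · simp
              · rw [← hsp, List.map_cons, List.prod_cons, hxB, mul_assoc]
                have h6 := (hbd [] (TS'.map FTree.label) (by simp)).2
                rw [h6]
                calc (lbl B).prod * s = (lbl B).prod * ((lbl R').prod * cr) := by rw [hscut]
                _ = (lbl R).prod * cr := by rw [hBR, lbl_append, List.prod_append, mul_assoc]
                _ = s := hstart
            | cons a l1 =>
              simp only [List.map_cons, List.cons_append, List.cons.injEq] at hsp
              obtain ⟨rfl, hsp2⟩ := hsp
              have h6 := hbd l1 l2 hsp2
              constructor
              · rw [List.prod_cons, ← mul_assoc, hxB, htx]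
                exact h6.1
              · exact h6.2
        · -- no cut: all of R is the final block
          obtain ⟨Tf, hTfv, hTfy, hTfl, hTfh⟩ := ih (V.erase (t, s)) d t cr R hRne
            (fun T hT => hval T (hsub T hT))
            (fun z hz => hcons z (hlift z hz))
            (fun l1 l2 hsp hl1 hl2 => (hPairs l1 l2 hsp hl1 hl2).2)
            (by
              intro l1 l2 hsp hl1 hl2
              refine Finset.mem_erase.2 ⟨?_, (hPairs l1 l2 hsp hl1 hl2).1⟩
              intro hcon
              rw [Prod.mk.injEq] at hcon
              refine hcut ⟨l1.length, List.length_pos_iff.2 hl1, ?_, ?_, ?_⟩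
              · have h1 : l1.length + l2.length = (lbl R).length := by rw [hsp]; simp
                have h2 : (lbl R).length = R.length := List.length_map _
                have h3 : 0 < l2.length := List.length_pos_iff.2 hl2
                omega
              · rw [← eq_take_of_append hsp]; exact hcon.1
              · rw [← eq_drop_of_append hsp]; exact hcon.2)
            hcard'
          refine ⟨[], Tf, [], R, by simp, hRne, by simp, by simp, by simp, hTfv, ?_, hTfl, ?_, ?_⟩
          · refine le_trans hTfh ?_
            have : hmax R ≤ hmax (hd :: Ltl) := hmax_subset hsub
            omega
          · simpa using hTfy
          · intro l1 l2 hsp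
            simp only [List.map_nil] at hsp
            obtain ⟨h1, h2⟩ := List.append_eq_nil_iff.1 hsp.symm
            subst h1; subst h2
            refine ⟨by simp, ?_⟩
            simp only [List.prod_nil, one_mul]
            rw [hTfl, hstart]
    -- apply hS2 to the tail
    obtain ⟨TS, Tf, Ps, Rf, hpart, hRfne, hPsne, hlbls, hTSmem, hTfv, hTfh, hTfl, hy, hbd⟩ :=
      hS2 Ltl.length Ltl le_rfl hLtlne (fun T hT => by simp [hT])
        (fun z hz => by
          rw [show lbl (hd :: Ltl) = [hd.label] ++ lbl Ltl from by simp [lbl]]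
          exact consec_append_left _ hz)
        (by
          intro l1 l2 hsp hl1 hl2
          have hsp' : lbl (hd :: Ltl) = (hd.label :: l1) ++ l2 := by
            simp [lbl, hsp]
          have h1 := hV (hd.label :: l1) l2 hsp' (by simp) hl2
          have h2 := hctx (hd.label :: l1) l2 hsp' (by simp) hl2
          rw [List.prod_cons, ← mul_assoc, ← htdef] at h1 h2
          exact ⟨h1, h2.1, h2.2⟩)
        rfl
    have hppf : (lbl (hd :: Ltl)).prod = hd.label * ((lbl Ps.flatten).prod * (lbl Rf).prod) := by
      conv_lhs => rw [show lbl (hd :: Ltl) = hd.label :: lbl Ltl from by simp [lbl]]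
      rw [List.prod_cons]
      congr 1
      conv_lhs => rw [hpart]
      rw [lbl_append, List.prod_append]
    rcases eq_or_ne TS [] with hTSnil | hTSne
    · -- no interior blocks at all
      have hPsnil : Ps = [] := by
        rw [hTSnil] at hlbls
        simpa using (List.map_eq_nil_iff.1 hlbls.symm)
      have hRfL : Rf = Ltl := by rw [hpart, hPsnil]; simp
      refine ⟨node2 hd Tf, node2_valid (hval hd (by simp)) hTfv, ?_, ?_, ?_⟩
      · rw [node2_yield]
        have : Tf.yield = (Ltl.map FTree.yield).flatten := by
          rw [← hy, hTSnil]; simp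
        rw [this]; simp
      · rw [node2_label, hppf, hTfl, hPsnil]
        simp [lbl]
      · have h1 := node2_height hd Tf
        have h2 : hd.height ≤ hmax (hd :: Ltl) := height_le_hmax (by simp)
        have hexp : (v+1) * (3 * Fintype.card M + 2) = v * (3 * Fintype.card M + 2) + 3 * Fintype.card M + 2 := by ring
        omega
    · -- glue the interior blocks with lemG
      have hliftTS : ∀ z, Consec (TS.map FTree.label) z → Consec (lbl (hd :: Ltl)) z := by
        intro z hz
        rw [hlbls] at hz
        have h1 := consec_of_parts Rf hPsne hz
        rw [← hpart] at h1
        rw [show lbl (hd :: Ltl) = [hd.label] ++ lbl Ltl from by simp [lbl]]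
        exact consec_append_left _ h1
      have hconsG : ∀ z, Consec (lbl TS) z → eqL z t ∧ eqR z s := by
        intro z hz
        have hzJ : eqJ z d := hcons z (hliftTS z hz)
        obtain ⟨l1, mm, l2, hsp, hmne, hzprod⟩ := hz
        have hsp1 : lbl TS = l1 ++ (mm ++ l2) := by
          rw [hsp, List.append_assoc]
        have hsp2 : lbl TS = (l1 ++ mm) ++ l2 := hsp
        have hb1 := hbd l1 (mm ++ l2) hsp1
        have hb2 := hbd (l1 ++ mm) l2 hsp2
        have htz : t * z = t := by
          calc t * z = (t * l1.prod) * z := by rw [hb1.1]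
          _ = t * (l1 ++ mm).prod := by rw [List.prod_append, hzprod, mul_assoc]
          _ = t := hb2.1
        have hzs : z * s = s := by
          calc z * s = z * (l2.prod * (Tf.label * cr)) := by rw [hb2.2]
          _ = (mm ++ l2).prod * (Tf.label * cr) := by
              rw [List.prod_append, hzprod, mul_assoc]
          _ = s := hb1.2
        constructor
        · exact lstab htz (inJ_trans hzJ.1 htsJ.1.2)
        · exact rstab hzs (inJ_trans hzJ.1 htsJ.2.2)
      obtain ⟨TG, hTGv, hTGy, hTGl, hTGh⟩ := lemG (Fintype.card M) Finset.univ t s TS hTSne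
        (fun T hT => (hTSmem T hT).1) hconsG
        (fun l1 l2 _ _ => Finset.mem_univ _)
        (le_of_eq (Finset.card_univ))
      refine ⟨node2 hd (node2 TG Tf), node2_valid (hval hd (by simp))
        (node2_valid hTGv hTfv), ?_, ?_, ?_⟩
      · rw [node2_yield, node2_yield, hTGy, hy]
        simp
      · rw [node2_label, node2_label, hTGl, hTfl, hppf]
        congr 1
        rw [show lbl TS = TS.map FTree.label from rfl, hlbls, prod_map_parts]
      · have h1 := node2_height hd (node2 TG Tf)
        have h2 := node2_height TG Tf
        have h3 : hmax TS ≤ hmax (hd :: Ltl) + v * (3 * Fintype.card M + 2) :=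
          hmax_le fun T hT => (hTSmem T hT).2
        have h4 : hd.height ≤ hmax (hd :: Ltl) := height_le_hmax (by simp)
        have hexp : (v+1) * (3 * Fintype.card M + 2) = v * (3 * Fintype.card M + 2) + 3 * Fintype.card M + 2 := by ring
        omega



lemma inJ_refl (d : M) : inJ d d := ⟨1, 1, by simp⟩

lemma lemT [Fintype M] : ∀ (u : ℕ) (U : Finset M) (L : List (FTree M)),
    L ≠ [] → (∀ T ∈ L, T.Valid) →
    (∀ z, Consec (lbl L) z → z ∈ U) →
    U.card ≤ u →
    ∃ T : FTree M, T.Valid ∧ T.yield = (L.map FTree.yield).flatten ∧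
      T.label = (lbl L).prod ∧
      T.height ≤ hmax L + u * (Fintype.card (M × M) * (3 * Fintype.card M + 2) + 2) := by
  intro u
  induction u with
  | zero =>
    intro U L hne hval hU hcard
    exfalso
    have hdU : (lbl L).prod ∈ U := hU _ (consec_whole (lbl_ne_nil hne))
    have : 0 < U.card := Finset.card_pos.2 ⟨_, hdU⟩
    omega
  | succ u ih =>
    intro U L hne hval hU hcard
    classical
    set d := (lbl L).prod with hddef
    set KT := Fintype.card (M × M) * (3 * Fintype.card M + 2) + 2 with hKTdef
    set U' : Finset M := U.filter (fun z => ¬ inJ z d) with hU'def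
    have hdU : d ∈ U := hU _ (consec_whole (lbl_ne_nil hne))
    have hU'card : U'.card ≤ u := by
      have hlt : U'.card < U.card := by
        refine Finset.card_lt_card ⟨Finset.filter_subset _ _, fun hss => ?_⟩
        have := hss hdU
        rw [hU'def, Finset.mem_filter] at this
        exact this.2 (inJ_refl d)
      omega
    -- the chunk decomposition
    have hT2 : ∀ (m : ℕ) (R : List (FTree M)), R.length ≤ m → R ≠ [] →
        (∀ T ∈ R, T ∈ L) →
        (∀ z, Consec (lbl R) z → Consec (lbl L) z) →
        (∃ c, d = c * (lbl R).prod) →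
        ∃ (TS : List (FTree M)) (Ps : List (List (FTree M))) (Rf : List (FTree M)),
          R = Ps.flatten ++ Rf ∧ (∀ P ∈ Ps, P ≠ []) ∧
          TS.map FTree.label = Ps.map (fun P => (lbl P).prod) ∧
          (∀ T ∈ TS, T.Valid ∧ T.height ≤ hmax L + (u * KT + 1) ∧ inJ T.label d) ∧
          (TS = [] → Rf = R) ∧
          (∀ T ∈ Rf, T ∈ L) ∧
          (∀ z, Consec (lbl Rf) z → ¬ inJ z d) ∧
          (TS.map FTree.yield).flatten ++ (Rf.map FTree.yield).flatten
            = (R.map FTree.yield).flatten := by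
      intro m
      induction m with
      | zero =>
        intro R hlen hRne
        exfalso
        have := List.length_pos_iff.2 hRne
        omega
      | succ m ihm =>
        intro R hlen hRne hsub hlift hpre
        by_cases hcut : ∃ j, 0 < j ∧ j ≤ R.length ∧ inJ ((lbl R).take j).prod d
        · obtain ⟨j, ⟨hjpos, hjle, hjJ⟩, hjmin⟩ := exists_least hcut
          set C := R.take j with hCdef
          set R'' := R.drop j with hR''def
          have hCR : R = C ++ R'' := (List.take_append_drop _ _).symm
          have hlblC : lbl C = (lbl R).take j := lbl_take R j
          have hCne : C ≠ [] := by
            have : C.length = j := by rw [hCdef, List.length_take]; omega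
            intro h; rw [h] at this; simp at this; omega
          have hxJ : inJ (lbl C).prod d := by rw [hlblC]; exact hjJ
          have hCsub : ∀ T ∈ C, T ∈ L := fun T hT => hsub T (List.take_subset _ _ hT)
          set b := C.getLast hCne with hbdef
          have hCdl : C.dropLast ++ [b] = C := List.dropLast_append_getLast hCne
          have hbL : b ∈ L := hCsub b (List.getLast_mem hCne)
          -- the tree for the chunk C
          have hTC : ∃ TC : FTree M, TC.Valid ∧ TC.yield = (C.map FTree.yield).flatten ∧
              TC.label = (lbl C).prod ∧ TC.height ≤ hmax L + (u * KT + 1) := by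
            rcases eq_or_ne C.dropLast [] with hC' | hC'
            · have hCeq : C = [b] := by rw [← hCdl, hC']; simp
              refine ⟨b, hval b hbL, by simp [hCeq], by simp [hCeq, lbl], ?_⟩
              exact le_trans (height_le_hmax hbL) (by omega)
            · obtain ⟨Tsub, hTv, hTy, hTl, hTh⟩ := ih U' C.dropLast hC'
                (fun T hT => hval T (hCsub T (List.dropLast_subset _ hT)))
                (by
                  intro z hz
                  obtain ⟨l1, mm, l2, hsp, hmne, hzprod⟩ := hz
                  have hRsp : lbl R = (l1 ++ mm) ++ (l2 ++ lbl ([b] ++ R'')) := by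
                    conv_lhs => rw [hCR, ← hCdl]
                    rw [List.append_assoc, lbl_append, lbl_append, hsp]
                    simp [List.append_assoc]
                  have hzU : z ∈ U := hU z (hlift z (by
                    rw [hRsp]
                    exact consec_append_right _ (⟨l1, mm, [], by simp, hmne, hzprod⟩)))
                  rw [hU'def, Finset.mem_filter]
                  refine ⟨hzU, ?_⟩
                  intro hzJ
                  have hlen1 : (l1 ++ mm).length < j := by
                    have h1 : (l1 ++ mm).length ≤ (lbl C.dropLast).length := by
                      rw [hsp]; simp
                    have h2 : (lbl C.dropLast).length = C.length - 1 := by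
                      simp [lbl, List.length_dropLast]
                    have h3 : C.length = j := by rw [hCdef, List.length_take]; omega
                    have h4 : 0 < mm.length := List.length_pos_iff.2 hmne
                    have h5 : 0 < C.length := List.length_pos_iff.2 hCne
                    simp only [List.length_append] at h1 ⊢
                    omega
                  refine hjmin (l1 ++ mm).length hlen1 ⟨?_, by omega, ?_⟩
                  · have := List.length_pos_iff.2 hmne
                    simp only [List.length_append]
                    omega
                  · rw [← eq_take_of_append hRsp, List.prod_append, hzprod]
                    exact inJ_mul_left _ hzJ)
                hU'card
              refine ⟨node2 Tsub b, node2_valid hTv (hval b hbL), ?_, ?_, ?_⟩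
              · rw [node2_yield, hTy, ← hCdl]
                simp
              · rw [node2_label, hTl, ← hCdl, lbl_append, List.prod_append]
                simp [lbl]
              · refine le_trans (node2_height _ _) ?_
                have h1 : Tsub.height ≤ hmax L + u * KT := le_trans hTh (by
                  have : hmax C.dropLast ≤ hmax L :=
                    hmax_subset fun T hT => hCsub T (List.dropLast_subset _ hT)
                  omega)
                have h2 : b.height ≤ hmax L := height_le_hmax hbL
                omega
          obtain ⟨TC, hTCv, hTCy, hTCl, hTCh⟩ := hTC
          rcases eq_or_ne R'' [] with hR'' | hR''ne
          · have hCR' : C = R := by rw [hCR, hR'']; simp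
            refine ⟨[TC], [C], [], by simp [← hCR'], ?_, by simp [hTCl], ?_, ?_, by simp, ?_, ?_⟩
            · intro P hP; simp only [List.mem_singleton] at hP; subst hP; exact hCne
            · intro T hT; simp only [List.mem_singleton] at hT; subst hT
              exact ⟨hTCv, hTCh, by rw [hTCl]; exact hxJ⟩
            · intro h; simp at h
            · intro z hz; exact absurd hz consec_nil
            · simp [hTCy, hCR']
          · obtain ⟨TS'', Ps'', Rf, hpart, hPsne, hlbls, hTSmem, hTSnil, hRfsub, hRfcons, hy⟩ :=
              ihm R'' (by
                have h1 : R''.length = R.length - j := by rw [hR''def, List.length_drop]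
                omega) hR''ne
              (fun T hT => hsub T (List.drop_subset _ _ hT))
              (fun z hz => hlift z (by rw [hCR, lbl_append]; exact consec_append_left _ hz))
              (by
                obtain ⟨c, hc⟩ := hpre
                refine ⟨c * (lbl C).prod, ?_⟩
                rw [hc, mul_assoc]
                congr 1
                rw [hCR, lbl_append, List.prod_append])
            refine ⟨TC :: TS'', C :: Ps'', Rf, ?_, ?_, ?_, ?_, by simp, hRfsub, hRfcons, ?_⟩
            · rw [List.flatten_cons, List.append_assoc, ← hpart, hCR]
            · intro P hP
              rcases List.mem_cons.1 hP with rfl | hP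
              · exact hCne
              · exact hPsne P hP
            · rw [List.map_cons, List.map_cons, hlbls, hTCl]
            · intro T hT
              rcases List.mem_cons.1 hT with rfl | hT
              · exact ⟨hTCv, hTCh, by rw [hTCl]; exact hxJ⟩
              · exact hTSmem T hT
            · rw [List.map_cons, List.flatten_cons, hTCy, List.append_assoc, hy]
              conv_rhs => rw [hCR]
              rw [List.map_append, List.flatten_append]
        · -- no cut at all: R is a final block
          refine ⟨[], [], R, by simp, by simp, by simp, by simp, fun _ => rfl, hsub, ?_, by simp⟩
          intro z hz hzJ
          obtain ⟨l1, mm, l2, hsp, hmne, hzprod⟩ := hz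
          refine hcut ⟨(l1 ++ mm).length, ?_, ?_, ?_⟩
          · have := List.length_pos_iff.2 hmne
            simp only [List.length_append]
            omega
          · have h1 : (l1 ++ mm).length ≤ (lbl R).length := by
              rw [hsp]; simp
            have h2 : (lbl R).length = R.length := List.length_map _
            omega
          · have hsp2 : lbl R = (l1 ++ mm) ++ l2 := hsp
            rw [← eq_take_of_append hsp2, List.prod_append, hzprod]
            exact inJ_mul_left _ hzJ
    -- apply hT2 to all of L
    obtain ⟨TS, Ps, Rf, hpart, hPsne, hlbls, hTSmem, hTSnil, hRfsub, hRfcons, hy⟩ :=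
      hT2 L.length L le_rfl hne (fun T hT => hT) (fun z hz => hz) ⟨1, (one_mul _).symm⟩
    have hTSne : TS ≠ [] := by
      intro h
      have hRfL : Rf = L := hTSnil h
      exact hRfcons d (by rw [hRfL]; exact consec_whole (lbl_ne_nil hne)) (inJ_refl d)
    -- the smooth lemma applies to the chunk sequence
    have hconsS : ∀ z, Consec (lbl TS) z → eqJ z d := by
      intro z hz
      constructor
      · -- inJ z d
        obtain ⟨l1, mm, l2, hsp, hmne, hzprod⟩ := hz
        obtain ⟨y, mm', rfl⟩ : ∃ y mm', mm = y :: mm' := by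
          cases mm with
          | nil => exact absurd rfl hmne
          | cons a l => exact ⟨a, l, rfl⟩
        have hymem : y ∈ lbl TS := by
          rw [hsp]; simp
        obtain ⟨T, hT, rfl⟩ := List.mem_map.1 hymem
        rw [← hzprod, List.prod_cons]
        exact inJ_mul_right _ (hTSmem T hT).2.2
      · -- inJ d z
        have h1 : Consec (lbl (Ps.flatten ++ Rf)) z := by
          refine consec_of_parts Rf hPsne ?_
          rw [← hlbls]
          exact hz
        rw [← hpart] at h1
        exact inJ_prod_of_consec h1
    obtain ⟨TG, hTGv, hTGy, hTGl, hTGh⟩ := lemS (Fintype.card (M × M)) Finset.univ d 1 1 TS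
      hTSne (fun T hT => (hTSmem T hT).1) hconsS
      (by
        intro l1 l2 hsp hl1 hl2
        constructor
        · rw [one_mul]
          refine hconsS _ ?_
          rw [hsp]
          exact consec_prefix hl1 l2
        · rw [mul_one]
          exact hconsS _ ⟨l1, l2, [], by simp [hsp], hl2, rfl⟩)
      (fun _ _ _ _ _ => Finset.mem_univ _) (le_of_eq Finset.card_univ)
    have hmaxTS : hmax TS ≤ hmax L + (u * KT + 1) :=
      hmax_le fun T hT => (hTSmem T hT).2.1
    have hTGl' : TG.label = (lbl Ps.flatten).prod := by
      rw [hTGl, show lbl TS = TS.map FTree.label from rfl, hlbls, prod_map_parts]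
    have hexp : (u+1) * KT = u * KT + Fintype.card (M × M) * (3 * Fintype.card M + 2) + 2 := by
      rw [hKTdef]; ring
    rcases eq_or_ne Rf [] with hRfnil | hRfne
    · refine ⟨TG, hTGv, ?_, ?_, ?_⟩
      · rw [hTGy, ← hy, hRfnil]
        simp
      · rw [hTGl', hddef, hpart, hRfnil]
        simp
      · refine le_trans hTGh ?_
        omega
    · obtain ⟨TRf, hTRfv, hTRfy, hTRfl, hTRfh⟩ := ih U' Rf hRfne
        (fun T hT => hval T (hRfsub T hT))
        (by
          intro z hz
          rw [hU'def, Finset.mem_filter]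
          refine ⟨hU z ?_, hRfcons z hz⟩
          rw [hpart, lbl_append]
          exact consec_append_left _ hz)
        hU'card
      refine ⟨node2 TG TRf, node2_valid hTGv hTRfv, ?_, ?_, ?_⟩
      · rw [node2_yield, hTGy, hTRfy, hy]
      · rw [node2_label, hTGl', hTRfl, hddef]
        conv_rhs => rw [hpart]
        rw [lbl_append, List.prod_append]
      · have h1 := node2_height TG TRf
        have h2 : TG.height ≤ hmax TS + Fintype.card (M × M) * (3 * Fintype.card M + 2) := hTGh
        have h3 : TRf.height ≤ hmax Rf + u * KT := hTRfh
        have h4 : hmax Rf ≤ hmax L := hmax_subset hRfsub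
        omega



lemma yield_leaf_flatten (w : List M) :
    ((w.map (FTree.leaf : M → FTree M)).map FTree.yield).flatten = w := by
  induction w with
  | nil => simp
  | cons a l ih =>
    rw [List.map_cons, List.map_cons, List.flatten_cons, ih]
    rfl

lemma hmax_leaf (w : List M) : hmax (w.map (FTree.leaf : M → FTree M)) = 0 := by
  have h : hmax (w.map (FTree.leaf : M → FTree M)) ≤ 0 := by
    refine hmax_le ?_
    intro T hT
    obtain ⟨a, _, rfl⟩ := List.mem_map.1 hT
    exact le_of_eq rfl
  omega


end FFproof

/-- Simon's Factorization Forest Theorem. For every finite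
monoid `M` there is a bound `k` (e.g. `k = 3|M|`) such that every nonempty
sequence over `M` is the yield of some factorization tree of height at most `k`. -/
theorem factorization_forest {M : Type*} [Monoid M] [Fintype M] :
    ∃ k : ℕ, ∀ w : List M, w ≠ [] →
      ∃ t : FTree M, t.Valid ∧ t.yield = w ∧ t.height ≤ k := by
  classical
  refine ⟨Fintype.card M * (Fintype.card (M × M) * (3 * Fintype.card M + 2) + 2), ?_⟩
  intro w hw
  obtain ⟨T, hv, hy, _, hh⟩ := FFproof.lemT (Fintype.card M) Finset.univ
    (w.map FTree.leaf)
    (by simp [hw])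
    (by
      intro T hT
      obtain ⟨a, _, rfl⟩ := List.mem_map.1 hT
      trivial)
    (fun z _ => Finset.mem_univ _) (le_of_eq Finset.card_univ)
  refine ⟨T, hv, ?_, ?_⟩
  · rw [hy, FFproof.yield_leaf_flatten]
  · refine le_trans hh ?_
    rw [FFproof.hmax_leaf]
    omega
end
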